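/- Let F_p be a free set of graphs of order p and suppose S_p ∈ F_p (the star on p vertices). With q ≥ 1, let Q be the graph on vertices {a₁, a₂, b, c₁, …, c_{p−3}} with edges {a₁a₂} ∪ {a_i c_j : 1 ≤ i ≤ 2, 1 ≤ j ≤ q}, and let T = Q − a₁c₁ (the graph Q with edge a₁c₁ removed). If Q ∈ F_p and the graph R = T + a₂b contains a member R' of F_p as a subgraph, then no subgraph of T is isomorphic to a member of F_p, while both T + a₁c₁ and T + a₂b contain subgraphs isomorphic to members of F_p; hence F_p is hard. -/

import Mathlib

/-- `A` is isomorphic to a subgraph of `B` (both on `p` vertices). -/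
def SubIso {p : ℕ} (A B : SimpleGraph (Fin p)) : Prop :=
  ∃ e : Fin p ≃ Fin p, A.map e.toEmbedding ≤ B

/-- A set of graphs of order `p` is free if no member is isomorphic to a subgraph
of another (distinct) member. -/
def Free {p : ℕ} (Fp : Set (SimpleGraph (Fin p))) : Prop :=
  ∀ A ∈ Fp, ∀ B ∈ Fp, A ≠ B → ¬ SubIso A B

/-- A set `Fp` of graphs of order `p` is hard: there are a graph `J` and two distinct
non-edges `e₁, e₂` of `J` such that no subgraph of `J` is isomorphic to a member of `Fp`,
while both `J + e₁` and `J + e₂` contain subgraphs isomorphic to members of `Fp`. -/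
def Hard {p : ℕ} (Fp : Set (SimpleGraph (Fin p))) : Prop :=
  ∃ J : SimpleGraph (Fin p), ∃ e₁ e₂ : Sym2 (Fin p),
    ¬ e₁.IsDiag ∧ ¬ e₂.IsDiag ∧ e₁ ∉ J.edgeSet ∧ e₂ ∉ J.edgeSet ∧ e₁ ≠ e₂ ∧
    (∀ A ∈ Fp, ¬ SubIso A J) ∧
    (∃ A ∈ Fp, SubIso A (J ⊔ SimpleGraph.fromEdgeSet {e₁})) ∧
    (∃ A ∈ Fp, SubIso A (J ⊔ SimpleGraph.fromEdgeSet {e₂}))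

/-- The star on `p` vertices, centered at vertex `0`. -/
def starGraph (p : ℕ) : SimpleGraph (Fin p) :=
  SimpleGraph.fromRel (fun u v => u.val = 0 ∧ v.val ≠ 0)

/-- The graph `Q` on vertices `{a₁ = 0, a₂ = 1, b = 2, c₁ = 3, …, c_{p-3} = p-1}` with
edges `a₁a₂` and `a_i c_j` for `i ∈ {1,2}`, `1 ≤ j ≤ q`. -/
def Qgraph (p q : ℕ) : SimpleGraph (Fin p) :=
  SimpleGraph.fromRel
    (fun u v => (u.val = 0 ∧ v.val = 1) ∨ ((u.val = 0 ∨ u.val = 1) ∧ 3 ≤ v.val ∧ v.val < 3 + q))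

lemma subIso_refl {p : ℕ} (A : SimpleGraph (Fin p)) : SubIso A A := by
  refine ⟨Equiv.refl _, ?_⟩
  intro u v h
  simp only [SimpleGraph.map_adj] at h
  obtain ⟨a, b, hab, ha, hb⟩ := h
  simpa [← ha, ← hb] using hab

lemma subIso_trans_le {p : ℕ} {A B C : SimpleGraph (Fin p)}
    (h : SubIso A B) (hBC : B ≤ C) : SubIso A C := by
  obtain ⟨e, he⟩ := h
  exact ⟨e, he.trans hBC⟩

lemma subIso_ncard_le {p : ℕ} {A B : SimpleGraph (Fin p)} (h : SubIso A B) :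
    A.edgeSet.ncard ≤ B.edgeSet.ncard := by
  obtain ⟨e, he⟩ := h
  have himg : Sym2.map e '' A.edgeSet ⊆ B.edgeSet := by
    intro x hx
    obtain ⟨y, hy, rfl⟩ := hx
    apply SimpleGraph.edgeSet_mono he
    induction y with
    | _ a b =>
      simp only [Sym2.map_pair_eq, SimpleGraph.mem_edgeSet] at *
      exact ⟨e.toEmbedding.injective.ne hy.ne, a, b, hy, rfl, rfl⟩
  calc A.edgeSet.ncard = (Sym2.map e '' A.edgeSet).ncard :=
        (Set.ncard_image_of_injective _ (Sym2.map.injective e.injective)).symm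
    _ ≤ B.edgeSet.ncard := Set.ncard_le_ncard himg (Set.toFinite _)

/-- with `Fp` free, `S_p ∈ Fp`, `Q = Qgraph p q ∈ Fp` (`q ≥ 1`),
`T = Q - a₁c₁`, if `R = T + a₂b` contains a member of `Fp` as a subgraph, then no subgraph
of `T` is isomorphic to a member of `Fp`, while both `T + a₁c₁` and `T + a₂b` contain
subgraphs isomorphic to members of `Fp`; hence `Fp` is hard. -/
theorem hard_via_T {p q : ℕ} (hp : 4 ≤ p) (hq1 : 1 ≤ q) (hq2 : q ≤ p - 3)
    (Fp : Set (SimpleGraph (Fin p))) (hfree : Free Fp)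
    (hstar : starGraph p ∈ Fp) (hQ : Qgraph p q ∈ Fp)
    (T : SimpleGraph (Fin p))
    (hT : T = Qgraph p q \
      SimpleGraph.fromEdgeSet {s((⟨0, by omega⟩ : Fin p), (⟨3, by omega⟩ : Fin p))})
    (hR : ∃ R' ∈ Fp, SubIso R'
      (T ⊔ SimpleGraph.fromEdgeSet {s((⟨1, by omega⟩ : Fin p), (⟨2, by omega⟩ : Fin p))})) :
    (∀ A ∈ Fp, ¬ SubIso A T) ∧
    (∃ A ∈ Fp, SubIso A
      (T ⊔ SimpleGraph.fromEdgeSet {s((⟨0, by omega⟩ : Fin p), (⟨3, by omega⟩ : Fin p))})) ∧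
    (∃ A ∈ Fp, SubIso A
      (T ⊔ SimpleGraph.fromEdgeSet {s((⟨1, by omega⟩ : Fin p), (⟨2, by omega⟩ : Fin p))})) ∧
    Hard Fp := by
  set x0 : Fin p := ⟨0, by omega⟩
  set x1 : Fin p := ⟨1, by omega⟩
  set x2 : Fin p := ⟨2, by omega⟩
  set x3 : Fin p := ⟨3, by omega⟩
  have hdiag03 : ¬ (s(x0, x3)).IsDiag := by
    simp [Sym2.isDiag_iff_proj_eq, x0, x3, Fin.ext_iff]
  have hdiag12 : ¬ (s(x1, x2)).IsDiag := by
    simp [Sym2.isDiag_iff_proj_eq, x1, x2, Fin.ext_iff]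
  have hmem03 : s(x0, x3) ∈ (Qgraph p q).edgeSet := by
    simp only [SimpleGraph.mem_edgeSet, Qgraph, SimpleGraph.fromRel_adj]
    refine ⟨by simp [x0, x3, Fin.ext_iff], Or.inl (Or.inr ⟨Or.inl ?_, ?_, ?_⟩)⟩ <;>
      simp [x0, x3] <;> omega
  have hfe03 : (SimpleGraph.fromEdgeSet {s(x0, x3)}).edgeSet = {s(x0, x3)} := by
    rw [SimpleGraph.edgeSet_fromEdgeSet]
    ext e
    simp only [Set.mem_diff, Set.mem_singleton_iff, Set.mem_setOf_eq]
    constructor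
    · exact fun h => h.1
    · rintro rfl; exact ⟨rfl, hdiag03⟩
  have hTedge : T.edgeSet = (Qgraph p q).edgeSet \ {s(x0, x3)} := by
    rw [hT, SimpleGraph.edgeSet_sdiff, hfe03]
  have hTleQ : T ≤ Qgraph p q := by rw [hT]; exact sdiff_le
  -- Part 1
  have part1 : ∀ A ∈ Fp, ¬ SubIso A T := by
    intro A hA hsub
    have hsubQ : SubIso A (Qgraph p q) := subIso_trans_le hsub hTleQ
    by_cases hAQ : A = Qgraph p q
    · subst hAQ
      have hle := subIso_ncard_le hsub
      rw [hTedge] at hle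
      have hlt : ((Qgraph p q).edgeSet \ {s(x0, x3)}).ncard < (Qgraph p q).edgeSet.ncard :=
        Set.ncard_diff_singleton_lt_of_mem hmem03 (Set.toFinite _)
      omega
    · exact hfree A hA (Qgraph p q) hQ hAQ hsubQ
  -- T ⊔ {a₁c₁} = Q
  have hfe03le : SimpleGraph.fromEdgeSet {s(x0, x3)} ≤ Qgraph p q := by
    rw [← SimpleGraph.edgeSet_subset_edgeSet, hfe03]
    simpa using hmem03
  have hTQ : T ⊔ SimpleGraph.fromEdgeSet {s(x0, x3)} = Qgraph p q := by
    rw [hT]; exact sdiff_sup_cancel hfe03le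
  have part2 : ∃ A ∈ Fp, SubIso A (T ⊔ SimpleGraph.fromEdgeSet {s(x0, x3)}) :=
    ⟨Qgraph p q, hQ, by rw [hTQ]; exact subIso_refl _⟩
  refine ⟨part1, part2, hR, ?_⟩
  -- Hardness
  refine ⟨T, s(x0, x3), s(x1, x2), hdiag03, hdiag12, ?_, ?_, ?_, part1, part2, hR⟩
  · rw [hTedge]; simp
  · rw [hTedge]
    intro h
    have := h.1
    simp only [SimpleGraph.mem_edgeSet, Qgraph, SimpleGraph.fromRel_adj] at this
    rcases this with ⟨-, h | h⟩ <;> simp [x1, x2] at h <;> omega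
  · intro h
    rw [Sym2.eq_iff] at h
    rcases h with ⟨h, -⟩ | ⟨h, -⟩ <;> simp [x0, x1, x3, Fin.ext_iff] at h
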